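/- arXiv:1906.07394 — 2 statements merged into one kernel-verified Lean document; each statement's English description precedes it below -/
import Mathlib

section
/- Let G be a connected finite simple graph on n ≥ 2 vertices that is not complete, and let k = ⌈log₂(diam(G))⌉. Then NM(G^{k}) (where G^{k} is the 2^{k-1}-th distance power of G) has no zero entries, and k is the smallest positive integer with this property. -/
open Classical in
/-- The neighbourhood matrix `NM(G)` of a finite simple graph. -/
noncomputable def NM {V : Type*} [Fintype V] (G : SimpleGraph V) : Matrix V V ℤ :=
  fun i j =>
    if i = j then -((G.neighborSet i).ncard : ℤ)
    else if G.Adj i j then ((G.neighborSet j \ G.neighborSet i).ncard : ℤ)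
    else -(((G.neighborSet i ∩ G.neighborSet j).ncard : ℤ))

/-- The `r`-th distance power of `G`: joins distinct vertices at distance `≤ r`. -/
def distPow {V : Type*} (G : SimpleGraph V) (r : ℕ) : SimpleGraph V where
  Adj i j := i ≠ j ∧ G.Reachable i j ∧ G.dist i j ≤ r
  symm := by
    constructor
    intro i j ⟨h1, h2, h3⟩
    exact ⟨h1.symm, h2.symm, by rwa [SimpleGraph.dist_comm]⟩
  loopless := ⟨fun i h => h.1 rfl⟩

/-- Distances to the `n`-th vertex of a walk. -/
lemma dist_getVert_aux {V : Type*} {G : SimpleGraph V} (hconn : G.Connected) :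
    ∀ {u v : V} (p : G.Walk u v) (n : ℕ),
      G.dist u (p.getVert n) ≤ n ∧ G.dist (p.getVert n) v ≤ p.length - n := by
  intro u v p
  induction p with
  | nil =>
    intro n
    rename_i x
    have h : (SimpleGraph.Walk.nil (u := x) (G := G)).getVert n = x :=
      SimpleGraph.Walk.getVert_of_length_le _ (by simp)
    rw [h]
    constructor <;> rw [SimpleGraph.dist_self] <;> simp
  | @cons a b c h q ih =>
    intro n
    cases n with
    | zero =>
      constructor
      · simp
      · simpa using SimpleGraph.dist_le (SimpleGraph.Walk.cons h q)
    | succ n =>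
      have hq := ih n
      constructor
      · calc G.dist a ((SimpleGraph.Walk.cons h q).getVert (n+1))
            = G.dist a (q.getVert n) := by rw [SimpleGraph.Walk.getVert_cons_succ]
          _ ≤ G.dist a b + G.dist b (q.getVert n) := hconn.dist_triangle
          _ ≤ 1 + n := by
              have h1 : G.dist a b ≤ 1 := by
                simpa using SimpleGraph.dist_le (h.toWalk)
              exact Nat.add_le_add h1 hq.1
          _ = n + 1 := Nat.add_comm 1 n
      · calc G.dist ((SimpleGraph.Walk.cons h q).getVert (n+1)) c
            = G.dist (q.getVert n) c := by rw [SimpleGraph.Walk.getVert_cons_succ]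
          _ ≤ q.length - n := hq.2
          _ ≤ (SimpleGraph.Walk.cons h q).length - (n+1) := by
              simp only [SimpleGraph.Walk.length_cons]
              omega

/-- If the diameter is within twice `r`, the matrix `NM (distPow G r)` has no
zero entry. -/
lemma nm_ne_zero_of_diam_le {n : ℕ} {G : SimpleGraph (Fin n)}
    (hn : 2 ≤ n) (hconn : G.Connected) {r : ℕ} (hr : 1 ≤ r)
    (hdiam : G.diam ≤ 2 * r) (hednt : G.ediam ≠ ⊤) :
    ∀ i j : Fin n, NM (distPow G r) i j ≠ 0 := by
  intro i j
  by_cases hij : i = j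
  · -- diagonal entry: `-deg i ≠ 0`
    subst hij
    have : ((distPow G r).neighborSet i).Nonempty := by
      -- pick a vertex `j ≠ i` and a `G`-neighbor of `i`
      have : Nontrivial (Fin n) := Fin.nontrivial_iff_two_le.mpr hn
      obtain ⟨j, hji⟩ := exists_ne i
      have hd : G.dist i j ≠ 0 := (hconn.pos_dist_of_ne (Ne.symm hji)).ne'
      obtain ⟨p, hp⟩ := (hconn i j).exists_walk_length_eq_dist
      have hpn : ¬ p.Nil := by
        intro hnil
        rw [SimpleGraph.Walk.nil_iff_length_eq] at hnil
        omega
      have hadj : G.Adj i (p.getVert 1) := p.adj_snd hpn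
      refine ⟨p.getVert 1, hadj.ne, SimpleGraph.Adj.reachable hadj, ?_⟩
      have := SimpleGraph.dist_le hadj.toWalk
      simp at this
      omega
    simp only [NM]
    rw [if_pos trivial]
    simp only [ne_eq, neg_eq_zero, Nat.cast_eq_zero]
    rw [Set.ncard_eq_zero (Set.toFinite _)]
    exact this.ne_empty
  · by_cases hadj : (distPow G r).Adj i j
    · -- adjacent: `i ∈ N(j) \ N(i)`
      have hne : ((distPow G r).neighborSet j \ (distPow G r).neighborSet i).Nonempty := by
        refine ⟨i, hadj.symm, ?_⟩
        simp [SimpleGraph.neighborSet]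
      simp only [NM, if_neg hij, if_pos hadj, ne_eq, Nat.cast_eq_zero]
      rw [Set.ncard_eq_zero (Set.toFinite _)]
      exact hne.ne_empty
    · -- non-adjacent distinct vertices: common neighbor exists
      have hreach : G.Reachable i j := hconn i j
      have hdr : r < G.dist i j := by
        by_contra hle
        exact hadj ⟨hij, hreach, not_lt.mp hle⟩
      set d := G.dist i j with hd
      have hd2 : d ≤ 2 * r := le_trans (SimpleGraph.dist_le_diam hednt) hdiam
      obtain ⟨p, hp⟩ := hreach.exists_walk_length_eq_dist
      set w := p.getVert r with hw
      have h1 : G.dist i w ≤ r := (dist_getVert_aux hconn p r).1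
      have h2 : G.dist w j ≤ d - r := by
        have := (dist_getVert_aux hconn p r).2
        rwa [hp] at this
      have hwi : i ≠ w := by
        intro h
        rw [← h] at h2
        omega
      have hwj : j ≠ w := by
        intro h
        rw [← h] at h1
        omega
      have hmem : w ∈ (distPow G r).neighborSet i ∩ (distPow G r).neighborSet j := by
        constructor
        · exact ⟨hwi, hconn i w, h1⟩
        · refine ⟨hwj, hconn j w, ?_⟩
          rw [SimpleGraph.dist_comm]
          omega
      simp only [NM, if_neg hij, if_neg hadj, ne_eq, neg_eq_zero, Nat.cast_eq_zero]
      rw [Set.ncard_eq_zero (Set.toFinite _)]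
      exact fun h => (h ▸ hmem : w ∈ (∅ : Set (Fin n)))

lemma diam_le_of_nm_ne_zero {n : ℕ} {G : SimpleGraph (Fin n)}
    (hn : 2 ≤ n) (hconn : G.Connected) {r : ℕ} (hr : 1 ≤ r) (hednt : G.ediam ≠ ⊤)
    (h : ∀ i j : Fin n, NM (distPow G r) i j ≠ 0) : G.diam ≤ 2 * r := by
  by_contra hlt
  push_neg at hlt
  have : Nonempty (Fin n) := ⟨⟨0, by omega⟩⟩
  obtain ⟨u, v, huv⟩ := SimpleGraph.exists_dist_eq_diam (G := G)
  have hduv : 2 * r < G.dist u v := huv ▸ hlt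
  have hne : u ≠ v := by
    intro h'
    rw [h', SimpleGraph.dist_self] at hduv
    omega
  have hnadj : ¬ (distPow G r).Adj u v := by
    rintro ⟨-, -, hle⟩
    omega
  have hempty : (distPow G r).neighborSet u ∩ (distPow G r).neighborSet v = ∅ := by
    ext w
    simp only [Set.mem_inter_iff, Set.mem_empty_iff_false, iff_false, not_and]
    rintro ⟨-, -, h1⟩ ⟨-, -, h2⟩
    have : G.dist u v ≤ G.dist u w + G.dist w v := hconn.dist_triangle
    rw [SimpleGraph.dist_comm (u := v)] at h2
    omega
  have := h u v
  simp only [NM, if_neg hne, if_neg hnadj, hempty] at this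
  simp at this

theorem iteration_number_eq_clog_diam {n : ℕ} (G : SimpleGraph (Fin n))
    (hn : 2 ≤ n) (hconn : G.Connected) (hnc : G ≠ ⊤)
    (k : ℕ) (hk : k = Nat.clog 2 G.diam) :
    (∀ i j : Fin n, NM (distPow G (2 ^ (k - 1))) i j ≠ 0) ∧
    (∀ m : ℕ, 0 < m →
      (∀ i j : Fin n, NM (distPow G (2 ^ (m - 1))) i j ≠ 0) → k ≤ m) := by
  have hnonempty : Nonempty (Fin n) := ⟨⟨0, by omega⟩⟩
  have hnontriv : Nontrivial (Fin n) := Fin.nontrivial_iff_two_le.mpr hn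
  -- ediam is finite
  have hednt : G.ediam ≠ ⊤ := by
    obtain ⟨u, v, huv⟩ := SimpleGraph.exists_edist_eq_ediam_of_finite (G := G)
    rw [← huv]
    exact SimpleGraph.edist_ne_top_iff_reachable.mpr (hconn u v)
  -- diam ≥ 2
  have hdiam2 : 2 ≤ G.diam := by
    obtain ⟨u, v, hne, hnadj⟩ : ∃ u v : Fin n, u ≠ v ∧ ¬ G.Adj u v := by
      by_contra hc
      push_neg at hc
      apply hnc
      ext u v
      simp only [SimpleGraph.top_adj]
      exact ⟨fun h => h.ne, fun h => hc u v h⟩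
    have h0 : G.dist u v ≠ 0 := (hconn.pos_dist_of_ne hne).ne'
    have h1 : G.dist u v ≠ 1 := fun h => hnadj (SimpleGraph.dist_eq_one_iff_adj.mp h)
    have := SimpleGraph.dist_le_diam hednt (u := u) (v := v)
    omega
  have hk1 : 1 ≤ k := hk ▸ Nat.clog_pos one_lt_two hdiam2
  constructor
  · apply nm_ne_zero_of_diam_le hn hconn (Nat.one_le_two_pow) _ hednt
    calc G.diam ≤ 2 ^ Nat.clog 2 G.diam := Nat.le_pow_clog one_lt_two _
      _ = 2 ^ k := by rw [hk]
      _ = 2 * 2 ^ (k - 1) := by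
          rw [← pow_succ']
          congr 1
          omega
  · intro m hm hnm
    have hle : G.diam ≤ 2 * 2 ^ (m - 1) :=
      diam_le_of_nm_ne_zero hn hconn (Nat.one_le_two_pow) hednt hnm
    have : G.diam ≤ 2 ^ m := by
      calc G.diam ≤ 2 * 2 ^ (m - 1) := hle
        _ = 2 ^ m := by rw [← pow_succ']; congr 1; omega
    calc k = Nat.clog 2 G.diam := hk
      _ ≤ Nat.clog 2 (2 ^ m) := Nat.clog_mono_right 2 this
      _ = m := Nat.clog_pow 2 m one_lt_two
end

section
/- A finite simple graph G on n ≥ 2 vertices is connected if and only if there exists a positive integer l such that NM(G^{l}) has no zero entries, where G^{l} denotes the 2^{l-1}-th distance power of G. -/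
theorem connected_iff_exists_nm_no_zero {n : ℕ} (G : SimpleGraph (Fin n))
    (hn : 2 ≤ n) :
    G.Connected ↔
      ∃ l : ℕ, 1 ≤ l ∧ ∀ i j : Fin n, NM (distPow G (2 ^ (l - 1))) i j ≠ 0 := by
  constructor
  · intro hG
    set D := Finset.univ.sup (fun p : Fin n × Fin n => G.dist p.1 p.2) with hD
    refine ⟨D + 1, Nat.le_add_left 1 D, ?_⟩
    have hH : ∀ i j : Fin n, i ≠ j → (distPow G (2 ^ (D + 1 - 1))).Adj i j := by
      intro i j hij
      refine ⟨hij, hG.preconnected i j, ?_⟩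
      simp only [Nat.add_sub_cancel]
      calc G.dist i j ≤ D :=
            Finset.le_sup (f := fun p : Fin n × Fin n => G.dist p.1 p.2)
              (Finset.mem_univ (i, j))
        _ ≤ 2 ^ D := (Nat.lt_two_pow_self (n := D)).le
    intro i j
    by_cases hij : i = j
    · subst hij
      rw [NM, if_pos rfl]
      simp only [neg_ne_zero, Nat.cast_ne_zero]
      obtain ⟨k, hk⟩ := Fintype.exists_ne_of_one_lt_card (by simp; omega) i
      exact ((Set.ncard_pos (Set.toFinite _)).mpr ⟨k, by exact hH i k (Ne.symm hk)⟩).ne'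
    · rw [NM, if_neg hij, if_pos (hH i j hij)]
      simp only [Nat.cast_ne_zero]
      have hi : i ∈ (distPow G (2 ^ (D + 1 - 1))).neighborSet j \ (distPow G (2 ^ (D + 1 - 1))).neighborSet i := by
        refine ⟨?_, ?_⟩
        · exact hH j i (Ne.symm hij)
        · exact fun h => (distPow G (2 ^ (D + 1 - 1))).loopless.irrefl i h
      exact ((Set.ncard_pos (Set.toFinite _)).mpr ⟨i, hi⟩).ne'
  · rintro ⟨l, hl, hnz⟩
    haveI hne : Nonempty (Fin n) := ⟨⟨0, by omega⟩⟩
    refine ⟨?_⟩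
    intro i j
    have hadj : ∀ a b : Fin n, (distPow G (2 ^ (l - 1))).Adj a b → G.Reachable a b := fun a b h => h.2.1
    by_cases hij : i = j
    · subst hij; exact SimpleGraph.Reachable.refl i
    by_cases hAdj : (distPow G (2 ^ (l - 1))).Adj i j
    · exact hadj i j hAdj
    · have hz := hnz i j
      rw [NM, if_neg hij, if_neg hAdj] at hz
      simp only [neg_ne_zero, Nat.cast_ne_zero] at hz
      obtain ⟨k, hk⟩ := Set.nonempty_of_ncard_ne_zero hz
      exact (hadj i k hk.1).trans (hadj j k hk.2).symm
end
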